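/- Let W ∈ ℝ^{n×n} be symmetric doubly stochastic with second-largest singular value σ_W < 1, Θ = (1+σ_W²)/(1−σ_W²), α > 0, L' > 0, ρ > 0. Suppose x_{i,k} = Σ_j W_{ij} x_{j,k−1} − α y_{i,k−1} and y_{i,k} = Σ_j W_{ij} y_{j,k−1} + Λ_i(x_{i,k}) − Λ_i(x_{i,k−1}), where each Λ_i is L'-Lipschitz and ȳ_{k−1} = (1/n)Σ_i Λ_i(x_{i,k−1}). Assume in addition that ‖Λ(x̄_{k−1})‖_F² ≤ (12L'/ρ²)(𝓛(x̄_{k−1}) − 𝓛*_S) (as is guaranteed by the descent lemma when x̄_{k−1} ∈ St(d,r)^ε with dist(S, x̄_{k−1}) ≤ δ ≤ 1). Then ‖𝐲_k − 𝐲̄_k‖_F² ≤ ((1+σ_W²)/2 + 4L'²α²Θ)‖𝐲_{k−1} − 𝐲̄_{k−1}‖_F² + (96 n α² L'³/ρ²)·Θ·(𝓛(x̄_{k−1}) − 𝓛*_S) + 8L'²Θ(1 + α²L'²)‖𝐱_{k−1} − 𝐱̄_{k−1}‖_F². -/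

import Mathlib

open Matrix BigOperators Finset

noncomputable section

namespace DRFGT

/-- Frobenius inner product `⟨A, B⟩ = Tr (A Bᵀ)`. -/
def finner {m k : Type*} [Fintype m] [Fintype k] (A B : Matrix m k ℝ) : ℝ :=
  Matrix.trace (A * Bᵀ)

/-- Frobenius norm `‖A‖_F = √⟨A, A⟩`. -/
def fnorm {m k : Type*} [Fintype m] [Fintype k] (A : Matrix m k ℝ) : ℝ :=
  Real.sqrt (finner A A)

/-- Skew part of a square matrix, `skew(A) = (A − Aᵀ)/2`. -/
def mskew {m : Type*} [Fintype m] (A : Matrix m m ℝ) : Matrix m m ℝ :=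
  (2 : ℝ)⁻¹ • (A - Aᵀ)

/-- Symmetric part of a square matrix, `sym(A) = (A + Aᵀ)/2`. -/
def msym {m : Type*} [Fintype m] (A : Matrix m m ℝ) : Matrix m m ℝ :=
  (2 : ℝ)⁻¹ • (A + Aᵀ)

/-- Relative (Riemannian) gradient `grad f(x) = skew(∇f(x) xᵀ) x`, where `Df` denotes the
Euclidean gradient `∇f` of `f`. -/
def rgrad {d r : ℕ} (Df : Matrix (Fin d) (Fin r) ℝ → Matrix (Fin d) (Fin r) ℝ)
    (x : Matrix (Fin d) (Fin r) ℝ) : Matrix (Fin d) (Fin r) ℝ :=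
  mskew (Df x * xᵀ) * x

/-- Landing field `Λ(x) = grad f(x) + λ x (xᵀ x − I_r)`. -/
def landing {d r : ℕ} (Df : Matrix (Fin d) (Fin r) ℝ → Matrix (Fin d) (Fin r) ℝ) (lam : ℝ)
    (x : Matrix (Fin d) (Fin r) ℝ) : Matrix (Fin d) (Fin r) ℝ :=
  rgrad Df x + lam • (x * (xᵀ * x - 1))

/-- The Stiefel manifold `St(d,r) = {x : xᵀ x = I_r}`. -/
def St (d r : ℕ) : Set (Matrix (Fin d) (Fin r) ℝ) := {x | xᵀ * x = 1}

/-- The safety region `St(d,r)^ε = {x : ‖xᵀ x − I_r‖_F ≤ ε}`. -/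
def StEps (d r : ℕ) (ε : ℝ) : Set (Matrix (Fin d) (Fin r) ℝ) :=
  {x | fnorm (xᵀ * x - 1) ≤ ε}

/-- The merit function `𝓛(x) = f(x) − ½⟨sym(xᵀ∇f(x)), xᵀx − I_r⟩ + γ·¼‖xᵀx − I_r‖_F²`. -/
def merit {d r : ℕ} (f : Matrix (Fin d) (Fin r) ℝ → ℝ)
    (Df : Matrix (Fin d) (Fin r) ℝ → Matrix (Fin d) (Fin r) ℝ) (γ : ℝ)
    (x : Matrix (Fin d) (Fin r) ℝ) : ℝ :=
  f x - (2 : ℝ)⁻¹ * finner (msym (xᵀ * Df x)) (xᵀ * x - 1)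
    + γ * (4 : ℝ)⁻¹ * fnorm (xᵀ * x - 1) ^ 2

/-- The gradient of the merit function at on-manifold points:
`∇𝓛(x) = ∇f(x) − x · sym(xᵀ∇f(x))` for `x ∈ St(d,r)`. -/
def meritGradSt {d r : ℕ} (Df : Matrix (Fin d) (Fin r) ℝ → Matrix (Fin d) (Fin r) ℝ)
    (x : Matrix (Fin d) (Fin r) ℝ) : Matrix (Fin d) (Fin r) ℝ :=
  Df x - x * msym (xᵀ * Df x)

/-- `x'` is the polar factor of a full-column-rank `x`, i.e. the projection `Proj_St(x)` of `x`
onto the Stiefel manifold: if `x = U S Vᵀ` is a thin SVD then `x' = U Vᵀ`, equivalently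
`x'ᵀ x' = I_r` and `x = x' P` for a positive definite `P` (namely `P = V S Vᵀ`). -/
def IsPolarFactor {d r : ℕ} (x x' : Matrix (Fin d) (Fin r) ℝ) : Prop :=
  x'ᵀ * x' = 1 ∧ ∃ P : Matrix (Fin r) (Fin r) ℝ, P.PosDef ∧ x = x' * P

/-- Frobenius distance from `x` to a set `S`: `dist(S,x) = inf_{y ∈ S} ‖x − y‖_F`. -/
def fdist {d r : ℕ} (S : Set (Matrix (Fin d) (Fin r) ℝ)) (x : Matrix (Fin d) (Fin r) ℝ) : ℝ :=
  sInf ((fun y => fnorm (x - y)) '' S)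

/-- Network average `z̄ = (1/n) Σᵢ zᵢ`. -/
def avg {n d r : ℕ} (z : Fin n → Matrix (Fin d) (Fin r) ℝ) : Matrix (Fin d) (Fin r) ℝ :=
  (n : ℝ)⁻¹ • ∑ i, z i

/-- Frobenius norm of a stacked family: `‖𝐳‖_F = (Σᵢ ‖zᵢ‖_F²)^{1/2}`. -/
def snorm {n d r : ℕ} (z : Fin n → Matrix (Fin d) (Fin r) ℝ) : ℝ :=
  Real.sqrt (∑ i, fnorm (z i) ^ 2)


def toE {m k : Type*} [Fintype m] [Fintype k] : Matrix m k ℝ →ₗ[ℝ] EuclideanSpace ℝ (m × k) where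
  toFun A := (WithLp.equiv 2 _).symm (fun p => A p.1 p.2)
  map_add' := fun _ _ => rfl
  map_smul' := fun _ _ => rfl
lemma toE_apply {m k : Type*} [Fintype m] [Fintype k] (A : Matrix m k ℝ) (p : m × k) :
    toE A p = A p.1 p.2 := rfl
lemma finner_self_eq {m k : Type*} [Fintype m] [Fintype k] (A : Matrix m k ℝ) :
    finner A A = ∑ p : m × k, (A p.1 p.2)^2 := by
  simp [finner, Matrix.trace, Matrix.diag, Matrix.mul_apply, Fintype.sum_prod_type, sq]
lemma fnorm_eq_norm {m k : Type*} [Fintype m] [Fintype k] (A : Matrix m k ℝ) :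
    fnorm A = ‖toE A‖ := by
  rw [fnorm, EuclideanSpace.norm_eq, finner_self_eq]
  congr 1
  refine Finset.sum_congr rfl fun p _ => ?_
  simp [toE_apply, Real.norm_eq_abs, sq_abs]

lemma fnorm_nonneg {m k : Type*} [Fintype m] [Fintype k] (A : Matrix m k ℝ) : 0 ≤ fnorm A :=
  Real.sqrt_nonneg _

def toS {n d r : ℕ} : (Fin n → Matrix (Fin d) (Fin r) ℝ) →ₗ[ℝ] EuclideanSpace ℝ (Fin n × Fin d × Fin r) where
  toFun z := (WithLp.equiv 2 _).symm (fun q => z q.1 q.2.1 q.2.2)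
  map_add' := fun _ _ => rfl
  map_smul' := fun _ _ => rfl

lemma toS_apply {n d r : ℕ} (z : Fin n → Matrix (Fin d) (Fin r) ℝ) (q) :
    toS z q = z q.1 q.2.1 q.2.2 := rfl

lemma fnorm_sq_eq {m k : Type*} [Fintype m] [Fintype k] (A : Matrix m k ℝ) :
    fnorm A ^ 2 = ∑ p : m × k, (A p.1 p.2)^2 := by
  rw [fnorm, finner_self_eq, Real.sq_sqrt (by positivity)]

lemma snorm_eq_norm {n d r : ℕ} (z : Fin n → Matrix (Fin d) (Fin r) ℝ) :
    snorm z = ‖toS z‖ := by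
  rw [snorm, EuclideanSpace.norm_eq, Fintype.sum_prod_type]
  congr 1
  refine Finset.sum_congr rfl fun i _ => ?_
  rw [fnorm_sq_eq]
  refine Finset.sum_congr rfl fun p _ => ?_
  simp [toS_apply, Real.norm_eq_abs, sq_abs]

lemma snorm_nonneg {n d r : ℕ} (z : Fin n → Matrix (Fin d) (Fin r) ℝ) : 0 ≤ snorm z :=
  Real.sqrt_nonneg _

lemma snorm_norm_def {n d r : ℕ} (z : Fin n → Matrix (Fin d) (Fin r) ℝ) :
    snorm z = Real.sqrt (∑ i, ‖toE (z i)‖ ^ 2) := by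
  rw [snorm]; congr 1; exact Finset.sum_congr rfl fun i _ => by rw [fnorm_eq_norm]

/-- triangle for two-term pointwise sums -/
lemma snorm_add_le {n d r : ℕ} (a b : Fin n → Matrix (Fin d) (Fin r) ℝ) :
    snorm (fun i => a i + b i) ≤ snorm a + snorm b := by
  have h : (fun i => a i + b i) = a + b := rfl
  rw [h, snorm_eq_norm, snorm_eq_norm, snorm_eq_norm, map_add]
  exact norm_add_le _ _

/-- pointwise Lipschitz bound for snorm -/
lemma snorm_le_lip {n d r : ℕ} {c : ℝ} (hc : 0 ≤ c) (z w : Fin n → Matrix (Fin d) (Fin r) ℝ)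
    (h : ∀ i, fnorm (z i) ≤ c * fnorm (w i)) : snorm z ≤ c * snorm w := by
  have h1 : ∑ i, fnorm (z i)^2 ≤ c^2 * ∑ i, fnorm (w i)^2 := by
    rw [Finset.mul_sum]
    refine Finset.sum_le_sum fun i _ => ?_
    have := h i
    nlinarith [fnorm_nonneg (z i), fnorm_nonneg (w i), mul_nonneg hc (fnorm_nonneg (w i))]
  calc snorm z = Real.sqrt (∑ i, fnorm (z i)^2) := rfl
    _ ≤ Real.sqrt (c^2 * ∑ i, fnorm (w i)^2) := Real.sqrt_le_sqrt h1
    _ = c * snorm w := by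
        rw [Real.sqrt_mul (by positivity), Real.sqrt_sq hc]; rfl

/-- constant stack -/
lemma snorm_const {n d r : ℕ} (c : Matrix (Fin d) (Fin r) ℝ) :
    snorm (fun _ : Fin n => c) = Real.sqrt n * fnorm c := by
  rw [snorm, Finset.sum_const, Finset.card_univ, Fintype.card_fin, nsmul_eq_mul,
    Real.sqrt_mul (by positivity), Real.sqrt_sq (fnorm_nonneg c)]

/-- mean removal -/
lemma snorm_sub_avg_le {n d r : ℕ} (hn : 0 < n) (z : Fin n → Matrix (Fin d) (Fin r) ℝ) :
    snorm (fun i => z i - avg z) ≤ snorm z := by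
  have hsum : ∑ i, toE (z i) = (n : ℝ) • toE (avg z) := by
    rw [avg, _root_.map_smul, ← map_sum, smul_smul, mul_inv_cancel₀ (by positivity : (n:ℝ) ≠ 0), one_smul]
  have h2 : ∑ i, (inner ℝ (toE (z i)) (toE (avg z)) : ℝ) = n * ‖toE (avg z)‖^2 := by
    rw [← sum_inner, hsum, real_inner_smul_left, real_inner_self_eq_norm_sq]
  have key : ∑ i, ‖toE (z i) - toE (avg z)‖^2 ≤ ∑ i, ‖toE (z i)‖^2 := by
    have e1 : ∑ i, ‖toE (z i) - toE (avg z)‖^2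
        = (∑ i, ‖toE (z i)‖^2) - 2 * ∑ i, (inner ℝ (toE (z i)) (toE (avg z)) : ℝ)
          + n * ‖toE (avg z)‖^2 := by
      simp_rw [norm_sub_sq_real]
      rw [Finset.sum_add_distrib, Finset.sum_sub_distrib, Finset.sum_const,
        Finset.card_univ, Fintype.card_fin, nsmul_eq_mul, ← Finset.mul_sum, mul_comm]
    rw [e1, h2]
    nlinarith [sq_nonneg ‖toE (avg z)‖, (by exact_mod_cast hn : (0:ℝ) < n)]
  rw [snorm_norm_def, snorm_norm_def]
  apply Real.sqrt_le_sqrt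
  refine le_trans (le_of_eq ?_) key
  exact Finset.sum_congr rfl fun i _ => by rw [map_sub]


lemma avg_add {n d r : ℕ} (a b : Fin n → Matrix (Fin d) (Fin r) ℝ) :
    avg (fun i => a i + b i) = avg a + avg b := by
  unfold avg; rw [Finset.sum_add_distrib, smul_add]

lemma avg_sub {n d r : ℕ} (a b : Fin n → Matrix (Fin d) (Fin r) ℝ) :
    avg (fun i => a i - b i) = avg a - avg b := by
  unfold avg; rw [Finset.sum_sub_distrib, smul_sub]

lemma fnorm_avg_le {n d r : ℕ} (w : Fin n → Matrix (Fin d) (Fin r) ℝ) :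
    fnorm (avg w) ≤ (n : ℝ)⁻¹ * ∑ i, fnorm (w i) := by
  rw [fnorm_eq_norm, avg, _root_.map_smul, map_sum, norm_smul, Real.norm_eq_abs,
    abs_of_nonneg (by positivity)]
  refine mul_le_mul_of_nonneg_left ?_ (by positivity)
  refine le_trans (norm_sum_le _ _) ?_
  exact le_of_eq (Finset.sum_congr rfl fun i _ => (fnorm_eq_norm (w i)).symm)

lemma sum_fnorm_le {n d r : ℕ} (w : Fin n → Matrix (Fin d) (Fin r) ℝ) :
    ∑ i, fnorm (w i) ≤ Real.sqrt n * snorm w := by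
  have h := sq_sum_le_card_mul_sum_sq (s := Finset.univ) (f := fun i => fnorm (w i))
  rw [Finset.card_univ, Fintype.card_fin] at h
  have hs : 0 ≤ ∑ i, fnorm (w i) := Finset.sum_nonneg fun i _ => fnorm_nonneg _
  rw [snorm, ← Real.sqrt_mul (by positivity)]
  rw [show ∑ i, fnorm (w i) = Real.sqrt ((∑ i, fnorm (w i))^2) from (Real.sqrt_sq hs).symm]
  exact Real.sqrt_le_sqrt h

lemma fnorm_tri' {d r : ℕ} (a b : Matrix (Fin d) (Fin r) ℝ) :
    fnorm a ≤ fnorm (a - b) + fnorm b := by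
  rw [fnorm_eq_norm, fnorm_eq_norm, fnorm_eq_norm, map_sub]
  have h := norm_add_le (toE a - toE b) (toE b)
  rwa [sub_add_cancel] at h

lemma mskew_smul {m : Type*} [Fintype m] (c : ℝ) (A : Matrix m m ℝ) :
    mskew (c • A) = c • mskew A := by
  simp [mskew, Matrix.transpose_smul, smul_sub, smul_comm c]

lemma mskew_sum {m ι : Type*} [Fintype m] (s : Finset ι) (A : ι → Matrix m m ℝ) :
    mskew (∑ i ∈ s, A i) = ∑ i ∈ s, mskew (A i) := by
  rw [mskew, Matrix.transpose_sum, ← Finset.sum_sub_distrib, Finset.smul_sum]; rfl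

lemma avg_landing {n d r : ℕ} (hn : 0 < n)
    (Dfi : Fin n → Matrix (Fin d) (Fin r) ℝ → Matrix (Fin d) (Fin r) ℝ)
    (Df : Matrix (Fin d) (Fin r) ℝ → Matrix (Fin d) (Fin r) ℝ)
    (hDf : Df = fun z => (n : ℝ)⁻¹ • ∑ i, Dfi i z) (lam : ℝ) (x : Matrix (Fin d) (Fin r) ℝ) :
    avg (fun i => landing (Dfi i) lam x) = landing Df lam x := by
  subst hDf
  unfold landing rgrad avg
  rw [Finset.sum_add_distrib, smul_add]
  congr 1
  · have h1 : ((n:ℝ)⁻¹ • ∑ i, Dfi i x) * xᵀ = (n:ℝ)⁻¹ • ∑ i, (Dfi i x * xᵀ) := by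
      rw [Matrix.smul_mul, Matrix.sum_mul]
    rw [h1, mskew_smul, mskew_sum, Matrix.smul_mul, Matrix.sum_mul]
  · rw [Finset.sum_const, Finset.card_univ, Fintype.card_fin,
      ← Nat.cast_smul_eq_nsmul ℝ, smul_smul, inv_mul_cancel₀ (by positivity : (n:ℝ) ≠ 0), one_smul]

lemma snorm_four {n d r : ℕ} {α : ℝ} (hα : 0 ≤ α)
    (u1 u2 u3 u4 : Fin n → Matrix (Fin d) (Fin r) ℝ) :
    snorm (fun i => u1 i - u2 i - α • u3 i - α • u4 i)
      ≤ snorm u1 + snorm u2 + α * snorm u3 + α * snorm u4 := by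
  have h : (fun i => u1 i - u2 i - α • u3 i - α • u4 i) = u1 - u2 - α • u3 - α • u4 := rfl
  rw [h, snorm_eq_norm, map_sub, map_sub, map_sub, _root_.map_smul, _root_.map_smul,
    snorm_eq_norm u1, snorm_eq_norm u2, snorm_eq_norm u3, snorm_eq_norm u4]
  have t1 := norm_sub_le (toS u1 - toS u2 - α • toS u3) (α • toS u4)
  have t2 := norm_sub_le (toS u1 - toS u2) (α • toS u3)
  have t3 := norm_sub_le (toS u1) (toS u2)
  rw [norm_smul, Real.norm_eq_abs, abs_of_nonneg hα] at t1 t2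
  linarith

set_option maxHeartbeats 1000000 in
lemma helper_sq (σ Y b R : ℝ) (hσ0 : 0 ≤ σ) (hσ1 : σ < 1) (hR0 : 0 ≤ R) (hR : R ≤ σ*Y + b) :
    (1 - σ^2)*R^2 ≤ (1 - σ^2)*((1 + σ^2)/2)*Y^2 + (1 + σ^2)*b^2 := by
  have hD : (0:ℝ) ≤ 1 - σ^2 := by nlinarith
  have hRsq : R^2 ≤ (σ*Y + b)^2 := pow_le_pow_left₀ hR0 hR 2
  have h1 := mul_le_mul_of_nonneg_left hRsq hD
  nlinarith [h1, sq_nonneg ((1 - σ^2)*Y - 2*σ*b)]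

lemma weight4 (a b c e : ℝ) : (a + b + c + e)^2 ≤ 2*a^2 + 4*b^2 + 8*c^2 + 8*e^2 := by
  nlinarith [sq_nonneg (a - 2*b), sq_nonneg (a - 4*c), sq_nonneg (a - 4*e),
    sq_nonneg (2*b - 4*c), sq_nonneg (2*b - 4*e), sq_nonneg (c - e)]

set_option maxHeartbeats 2000000 in
lemma final_ineq (σW α L' ρ n R Q X Y Z M sn : ℝ)
    (hσ0 : 0 ≤ σW) (hσ1 : σW < 1) (hα : 0 < α) (hL' : 0 < L') (hρ : 0 < ρ)
    (hsn : sn^2 = n)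
    (hR0 : 0 ≤ R) (hQ0 : 0 ≤ Q) (hX0 : 0 ≤ X) (hY0 : 0 ≤ Y) (hZ0 : 0 ≤ Z)
    (hR : R ≤ σW*Y + L'*Q)
    (hQ : Q ≤ (1 + σW)*X + α*Y + α*sn*Z + α*L'*X)
    (hZ : Z^2 ≤ 12 * L' / ρ ^ 2 * M) :
    R^2 ≤ ((1 + σW ^ 2) / 2 + 4 * L' ^ 2 * α ^ 2 * ((1 + σW ^ 2) / (1 - σW ^ 2))) * Y^2
      + 96 * n * α ^ 2 * L' ^ 3 / ρ ^ 2 * ((1 + σW ^ 2) / (1 - σW ^ 2)) * M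
      + 8 * L' ^ 2 * ((1 + σW ^ 2) / (1 - σW ^ 2)) * (1 + α ^ 2 * L' ^ 2) * X^2 := by
  have hD : (0:ℝ) < 1 - σW^2 := by nlinarith
  have hΘ0 : (0:ℝ) ≤ (1 + σW^2)/(1 - σW^2) := le_of_lt (div_pos (by positivity) hD)
  have hQsq : Q^2 ≤ ((1 + σW)*X + α*Y + α*sn*Z + α*L'*X)^2 :=
    pow_le_pow_left₀ hQ0 hQ 2
  have hw4 := weight4 ((1 + σW)*X) (α*Y) (α*sn*Z) (α*L'*X)
  have h8 : 2*((1 + σW)*X)^2 ≤ 8*X^2 := by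
    nlinarith [mul_nonneg (mul_nonneg (sub_nonneg.mpr hσ1.le)
      (by linarith : (0:ℝ) ≤ 3 + σW)) (sq_nonneg X)]
  have hzn : 8*(α*sn*Z)^2 = 8*n*α^2*Z^2 := by
    rw [show (α*sn*Z)^2 = sn^2*(α^2*Z^2) by ring, hsn]; ring
  have hQ2 : Q^2 ≤ 8*(1 + α^2*L'^2)*X^2 + 4*α^2*Y^2 + 8*n*α^2*Z^2 := by
    linarith [hQsq, hw4, h8, hzn]
  have s1 : R^2 ≤ (1 + σW^2)/2 * Y^2 + ((1 + σW^2)/(1 - σW^2)) * (L'^2 * Q^2) := by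
    have hexp : (1 - σW^2) * ((1 + σW^2)/2 * Y^2 + ((1 + σW^2)/(1 - σW^2)) * (L'^2 * Q^2))
        = (1 - σW^2)*((1 + σW^2)/2) * Y^2 + (1 + σW^2) * (L'^2 * Q^2) := by
      field_simp
    have s1' : (1 - σW^2) * R^2
        ≤ (1 - σW^2) * ((1 + σW^2)/2 * Y^2 + ((1 + σW^2)/(1 - σW^2)) * (L'^2 * Q^2)) := by
      rw [hexp]
      have h := helper_sq σW Y (L'*Q) R hσ0 hσ1 hR0 hR
      linarith [h]
    exact le_of_mul_le_mul_left s1' hD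
  have k1 : ((1 + σW^2)/(1 - σW^2)) * (L'^2 * Q^2)
      ≤ ((1 + σW^2)/(1 - σW^2)) * (L'^2 *
        (8*(1 + α^2*L'^2)*X^2 + 4*α^2*Y^2 + 8*n*α^2*Z^2)) :=
    mul_le_mul_of_nonneg_left (mul_le_mul_of_nonneg_left hQ2 (sq_nonneg L')) hΘ0
  have hn0 : (0:ℝ) ≤ n := hsn ▸ sq_nonneg sn
  have k3 : 8*n*α^2*L'^2*((1 + σW^2)/(1 - σW^2)) * Z^2
      ≤ 8*n*α^2*L'^2*((1 + σW^2)/(1 - σW^2)) * (12 * L' / ρ ^ 2 * M) :=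
    mul_le_mul_of_nonneg_left hZ (mul_nonneg (by positivity) hΘ0)
  generalize hθ : (1 + σW ^ 2) / (1 - σW ^ 2) = θ at s1 k1 k3 ⊢
  generalize hp : (ρ:ℝ) ^ 2 = p at k3 ⊢
  rw [show (96 * n * α ^ 2 * L' ^ 3 / p * θ * M : ℝ)
    = 8 * n * α ^ 2 * L' ^ 2 * θ * (12 * L' / p * M) by ring]
  linarith [s1, k1, k3]

/-- consensus error on `𝐲` under the local PŁ regime, Lemma 8 of the paper.
With a symmetric doubly stochastic `W` (contraction factor `σ_W < 1`, `Θ = (1+σ_W²)/(1−σ_W²)`),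
`L'`-Lipschitz local landing fields `Λᵢ`, the DRFGT updates, the tracking identity
`ȳ_{k−1} = (1/n)Σᵢ Λᵢ(x_{i,k−1})`, and the bound
`‖Λ(x̄_{k−1})‖² ≤ (12L'/ρ²)(𝓛(x̄_{k−1}) − 𝓛*_S)`, the consensus error on `𝐲` satisfies the
stated inequality. -/
theorem consensus_error_y_PL {n d r : ℕ} (hn : 0 < n) (σW α L' ρ lam γ LS : ℝ)
    (hσ0 : 0 ≤ σW) (hσ1 : σW < 1) (hα : 0 < α) (hL' : 0 < L') (hρ : 0 < ρ) (hlam : 0 < lam)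
    (W : Matrix (Fin n) (Fin n) ℝ)
    (hWsym : Wᵀ = W) (hWnn : ∀ i j, 0 ≤ W i j) (hWrow : ∀ i, ∑ j, W i j = 1)
    (hWcontract : ∀ z : Fin n → Matrix (Fin d) (Fin r) ℝ,
      snorm (fun i => (∑ j, W i j • z j) - avg z) ≤ σW * snorm (fun i => z i - avg z))
    (fi : Fin n → Matrix (Fin d) (Fin r) ℝ → ℝ)
    (Dfi : Fin n → Matrix (Fin d) (Fin r) ℝ → Matrix (Fin d) (Fin r) ℝ)
    (f : Matrix (Fin d) (Fin r) ℝ → ℝ) (hf : f = fun z => (n : ℝ)⁻¹ * ∑ i, fi i z)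
    (Df : Matrix (Fin d) (Fin r) ℝ → Matrix (Fin d) (Fin r) ℝ)
    (hDf : Df = fun z => (n : ℝ)⁻¹ • ∑ i, Dfi i z)
    (hLip : ∀ i, ∀ u v : Matrix (Fin d) (Fin r) ℝ,
      fnorm (landing (Dfi i) lam u - landing (Dfi i) lam v) ≤ L' * fnorm (u - v))
    (xp yp xc yc : Fin n → Matrix (Fin d) (Fin r) ℝ)
    (hxc : ∀ i, xc i = (∑ j, W i j • xp j) - α • yp i)
    (hyc : ∀ i, yc i = (∑ j, W i j • yp j)
      + landing (Dfi i) lam (xc i) - landing (Dfi i) lam (xp i))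
    (hybar : avg yp = avg (fun i => landing (Dfi i) lam (xp i)))
    (hΛbound : fnorm (landing Df lam (avg xp)) ^ 2 ≤
      12 * L' / ρ ^ 2 * (merit f Df γ (avg xp) - LS)) :
    snorm (fun i => yc i - avg yc) ^ 2 ≤
      ((1 + σW ^ 2) / 2 + 4 * L' ^ 2 * α ^ 2 * ((1 + σW ^ 2) / (1 - σW ^ 2)))
          * snorm (fun i => yp i - avg yp) ^ 2
        + 96 * n * α ^ 2 * L' ^ 3 / ρ ^ 2 * ((1 + σW ^ 2) / (1 - σW ^ 2))
          * (merit f Df γ (avg xp) - LS)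
        + 8 * L' ^ 2 * ((1 + σW ^ 2) / (1 - σW ^ 2)) * (1 + α ^ 2 * L' ^ 2)
          * snorm (fun i => xp i - avg xp) ^ 2 := by
  have hn' : (0:ℝ) < n := by exact_mod_cast hn
  -- column sums of W are 1
  have hWji : ∀ i j, W i j = W j i := by
    intro i j
    have h := congrFun (congrFun hWsym j) i
    rwa [Matrix.transpose_apply] at h
  have hcol : ∀ j, ∑ i, W i j = 1 := by
    intro j
    rw [Finset.sum_congr rfl fun i _ => hWji i j]
    exact hWrow j
  have havgW : avg (fun i => ∑ j, W i j • yp j) = avg yp := by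
    have h : ∑ i, ∑ j, W i j • yp j = ∑ j, yp j := by
      rw [Finset.sum_comm]
      refine Finset.sum_congr rfl fun j _ => ?_
      rw [← Finset.sum_smul, hcol j, one_smul]
    unfold avg
    rw [h]
  -- average of yc
  have hycfun : yc = fun i => (∑ j, W i j • yp j)
      + (landing (Dfi i) lam (xc i) - landing (Dfi i) lam (xp i)) := by
    funext i; rw [hyc i, add_sub_assoc]
  have havgyc : avg yc = avg yp
      + avg (fun i => landing (Dfi i) lam (xc i) - landing (Dfi i) lam (xp i)) := by
    have h2 : avg (fun i => (∑ j, W i j • yp j)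
        + (landing (Dfi i) lam (xc i) - landing (Dfi i) lam (xp i)))
        = avg (fun i => ∑ j, W i j • yp j)
          + avg (fun i => landing (Dfi i) lam (xc i) - landing (Dfi i) lam (xp i)) :=
      avg_add _ _
    rw [hycfun, h2, havgW]
  -- step 1: consensus recursion for y
  have hdec : (fun i => yc i - avg yc) = fun i =>
      ((∑ j, W i j • yp j) - avg yp)
      + ((landing (Dfi i) lam (xc i) - landing (Dfi i) lam (xp i))
        - avg (fun i' => landing (Dfi i') lam (xc i') - landing (Dfi i') lam (xp i'))) := by
    funext i
    rw [hyc i, havgyc]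
    abel
  have hR : snorm (fun i => yc i - avg yc)
      ≤ σW * snorm (fun i => yp i - avg yp) + L' * snorm (fun i => xc i - xp i) := by
    rw [hdec]
    refine le_trans (snorm_add_le _ _) ?_
    have h2 := hWcontract yp
    have h3 : snorm (fun i => (landing (Dfi i) lam (xc i) - landing (Dfi i) lam (xp i))
        - avg (fun i' => landing (Dfi i') lam (xc i') - landing (Dfi i') lam (xp i')))
        ≤ snorm (fun i => landing (Dfi i) lam (xc i) - landing (Dfi i) lam (xp i)) :=
      snorm_sub_avg_le hn _
    have h4 : snorm (fun i => landing (Dfi i) lam (xc i) - landing (Dfi i) lam (xp i))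
        ≤ L' * snorm (fun i => xc i - xp i) :=
      snorm_le_lip (le_of_lt hL') _ _ (fun i => hLip i (xc i) (xp i))
    linarith
  -- bound on the norm of the average of yp
  have hΛavg : avg (fun i => landing (Dfi i) lam (avg xp)) = landing Df lam (avg xp) :=
    avg_landing hn Dfi Df hDf lam _
  have hdiff : avg yp - landing Df lam (avg xp)
      = avg (fun i => landing (Dfi i) lam (xp i) - landing (Dfi i) lam (avg xp)) := by
    rw [avg_sub, hΛavg, hybar]
  have hfnormdiff : fnorm (avg yp - landing Df lam (avg xp))
      ≤ (n:ℝ)⁻¹ * (Real.sqrt n * (L' * snorm (fun i => xp i - avg xp))) := by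
    rw [hdiff]
    refine le_trans (fnorm_avg_le _) ?_
    refine mul_le_mul_of_nonneg_left ?_ (by positivity)
    calc ∑ i, fnorm (landing (Dfi i) lam (xp i) - landing (Dfi i) lam (avg xp))
        ≤ ∑ i, L' * fnorm (xp i - avg xp) :=
          Finset.sum_le_sum fun i _ => hLip i _ _
      _ = L' * ∑ i, fnorm (xp i - avg xp) := by rw [Finset.mul_sum]
      _ ≤ L' * (Real.sqrt n * snorm (fun i => xp i - avg xp)) :=
          mul_le_mul_of_nonneg_left (sum_fnorm_le _) (le_of_lt hL')
      _ = Real.sqrt n * (L' * snorm (fun i => xp i - avg xp)) := by ring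
  have hybnorm : fnorm (avg yp) ≤ fnorm (landing Df lam (avg xp))
      + (n:ℝ)⁻¹ * (Real.sqrt n * (L' * snorm (fun i => xp i - avg xp))) := by
    have := fnorm_tri' (avg yp) (landing Df lam (avg xp))
    linarith
  -- step 2: bound on snorm (xc - xp)
  have hxdec : (fun i => xc i - xp i) = fun i =>
      ((∑ j, W i j • xp j) - avg xp) - (xp i - avg xp) - α • (yp i - avg yp)
        - α • avg yp := by
    funext i
    rw [hxc i]
    simp only [smul_sub]
    abel
  have hsn : Real.sqrt n * ((n:ℝ)⁻¹ * (Real.sqrt n * (L' * snorm (fun i => xp i - avg xp))))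
      = L' * snorm (fun i => xp i - avg xp) := by
    rw [show Real.sqrt n * ((n:ℝ)⁻¹ * (Real.sqrt n * (L' * snorm (fun i => xp i - avg xp))))
      = (Real.sqrt n * Real.sqrt n) * (n:ℝ)⁻¹ * (L' * snorm (fun i => xp i - avg xp)) by ring,
      Real.mul_self_sqrt (by positivity), mul_inv_cancel₀ hn'.ne', one_mul]
  have hQle : snorm (fun i => xc i - xp i)
      ≤ (1 + σW) * snorm (fun i => xp i - avg xp) + α * snorm (fun i => yp i - avg yp)
        + α * Real.sqrt n * fnorm (landing Df lam (avg xp))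
        + α * L' * snorm (fun i => xp i - avg xp) := by
    rw [hxdec]
    refine le_trans (snorm_four (le_of_lt hα) _ _ _ _) ?_
    have c1 := hWcontract xp
    have c4 : snorm (fun _ : Fin n => avg yp) = Real.sqrt n * fnorm (avg yp) := snorm_const _
    have c5 : Real.sqrt n * fnorm (avg yp)
        ≤ Real.sqrt n * fnorm (landing Df lam (avg xp))
          + L' * snorm (fun i => xp i - avg xp) := by
      have h6 := mul_le_mul_of_nonneg_left hybnorm (Real.sqrt_nonneg (n:ℝ))
      rw [mul_add, hsn] at h6
      exact h6
    have c6 : α * snorm (fun _ : Fin n => avg yp)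
        ≤ α * Real.sqrt n * fnorm (landing Df lam (avg xp))
          + α * (L' * snorm (fun i => xp i - avg xp)) := by
      rw [c4]
      have h7 := mul_le_mul_of_nonneg_left c5 (le_of_lt hα)
      linarith
    linarith [c1, c6]
  have hsq : Real.sqrt (n:ℝ) ^ 2 = (n:ℝ) := Real.sq_sqrt (by positivity)
  exact final_ineq σW α L' ρ (n:ℝ) _ _ _ _ _ _ (Real.sqrt (n:ℝ)) hσ0 hσ1 hα hL' hρ hsq
    (snorm_nonneg _) (snorm_nonneg _) (snorm_nonneg _) (snorm_nonneg _) (fnorm_nonneg _)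
    hR hQle hΛbound

end DRFGT
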